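/- Let A be a semisimple F-algebra with, as a left module over itself, A ≅ ⨁ᵢ₌₁ᵗ Vᵢ^{mᵢ} where the Vᵢ are pairwise non-isomorphic simple A-modules, and let V be a finite-dimensional A-module with V ≅ ⨁ᵢ₌₁ᵗ Vᵢ^{sᵢ}. Then for every positive integer ℓ and every A-submodule U of V generated by ℓ elements, U is isomorphic to a submodule of ⨁ᵢ₌₁ᵗ Vᵢ^{min(sᵢ, ℓmᵢ)}; in particular dim U ≤ Σᵢ min(sᵢ, ℓmᵢ)·dim Vᵢ. -/

import Mathlib

open Module LinearMap Function

section helpers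
variable {A : Type*} [Ring A]

/-- swap of function arguments as a linear equivalence -/
def swapLE (R : Type*) [Semiring R] (ι : Type*) {κ : Type*} (φ : κ → Type*)
    [∀ j, AddCommMonoid (φ j)] [∀ j, Module R (φ j)] :
    (ι → ∀ j, φ j) ≃ₗ[R] ∀ j, ι → φ j where
  toFun f := fun j l => f l j
  map_add' _ _ := rfl
  map_smul' _ _ := rfl
  invFun f := fun l j => f j l
  left_inv _ := rfl
  right_inv _ := rfl

def sumPiLE (R : Type*) [Semiring R] {α β : Type*} (φ : α ⊕ β → Type*)
    [∀ x, AddCommMonoid (φ x)] [∀ x, Module R (φ x)] :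
    (∀ x, φ x) ≃ₗ[R] (∀ a, φ (.inl a)) × (∀ b, φ (.inr b)) where
  toFun f := (fun a => f (.inl a), fun b => f (.inr b))
  map_add' _ _ := rfl
  map_smul' _ _ := rfl
  invFun p := fun x => Sum.rec p.1 p.2 x
  left_inv f := funext fun x => by cases x <;> rfl
  right_inv _ := rfl

def subsingletonLE (R : Type*) [Semiring R] (X Y : Type*) [AddCommGroup X] [AddCommGroup Y]
    [Module R X] [Module R Y] [Subsingleton X] [Subsingleton Y] : X ≃ₗ[R] Y where
  toFun _ := 0
  map_add' _ _ := by simp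
  map_smul' _ _ := by simp
  invFun _ := 0
  left_inv x := Subsingleton.elim _ _
  right_inv y := Subsingleton.elim _ _

theorem schurZero {X Y : Type*} [AddCommGroup X] [Module A X] [AddCommGroup Y] [Module A Y]
    [IsSimpleModule A X] [IsSimpleModule A Y] (h : IsEmpty (X ≃ₗ[A] Y)) (g : X →ₗ[A] Y) :
    g = 0 := by
  by_contra hg
  exact h.elim (LinearEquiv.ofBijective g (LinearMap.bijective_of_ne_zero hg))

theorem piZeroDom {P : Type*} [Fintype P] [DecidableEq P] {X Y : Type*} [AddCommGroup X]
    [Module A X] [AddCommGroup Y] [Module A Y] (h : ∀ g : X →ₗ[A] Y, g = 0)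
    (g : (P → X) →ₗ[A] Y) : g = 0 := by
  apply LinearMap.ext; intro x
  calc g x = g (∑ k, Pi.single k (x k)) := by rw [Finset.univ_sum_single]
  _ = ∑ k, g (Pi.single k (x k)) := map_sum g _ _
  _ = 0 := Finset.sum_eq_zero fun k _ => by
      have := h (g ∘ₗ LinearMap.single A (fun _ : P => X) k)
      exact DFunLike.congr_fun this (x k)

theorem piZeroCod {Q : Type*} {X Y : Type*} [AddCommGroup X]
    [Module A X] [AddCommGroup Y] [Module A Y] (h : ∀ g : X →ₗ[A] Y, g = 0)
    (g : X →ₗ[A] (Q → Y)) : g = 0 := by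
  apply LinearMap.ext; intro x
  funext q
  exact DFunLike.congr_fun (h ((LinearMap.proj q) ∘ₗ g)) x

theorem keyBlock {t : ℕ} {X W : Fin t → Type*} [∀ j, AddCommGroup (X j)] [∀ j, Module A (X j)]
    [∀ j, AddCommGroup (W j)] [∀ j, Module A (W j)]
    (f : (∀ j, X j) →ₗ[A] (∀ j, W j)) (hf : Function.Injective f) (i : Fin t)
    (hz : ∀ j, j ≠ i → ∀ g : X i →ₗ[A] W j, g = 0) :
    ∃ g : X i →ₗ[A] W i, Function.Injective g := by
  refine ⟨(LinearMap.proj i) ∘ₗ f ∘ₗ LinearMap.single A X i, ?_⟩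
  rw [← LinearMap.ker_eq_bot]
  rw [Submodule.eq_bot_iff]
  intro y hy
  rw [LinearMap.mem_ker] at hy
  have h0 : f (Pi.single i y) = 0 := by
    funext j
    by_cases hj : j = i
    · subst hj; exact hy
    · exact DFunLike.congr_fun (hz j hj ((LinearMap.proj j) ∘ₗ f ∘ₗ LinearMap.single A X i)) y
  have h1 : Pi.single i y = 0 := hf (by rw [h0, map_zero])
  have h2 := congrFun h1 i
  rwa [Pi.single_eq_same, Pi.zero_apply] at h2

theorem dimLE {F : Type*} [Field F] [Algebra F A] {X Y : Type*}
    [AddCommGroup X] [Module A X] [Module F X] [IsScalarTower F A X]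
    [AddCommGroup Y] [Module A Y] [Module F Y] [IsScalarTower F A Y]
    [FiniteDimensional F Y] (f : X →ₗ[A] Y) (hf : Function.Injective f) :
    finrank F X ≤ finrank F Y :=
  LinearMap.finrank_le_finrank_of_injective (f := f.restrictScalars F) hf

theorem finrankFun {F : Type*} [Field F] (V P : Type*) [AddCommGroup V] [Module F V]
    [FiniteDimensional F V] [Fintype P] :
    finrank F (P → V) = Fintype.card P * finrank F V := by
  rw [Module.finrank_pi_fintype, Finset.sum_const, Finset.card_univ, smul_eq_mul]

end helpers
open Module LinearMap Function

section decomp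
variable {A : Type*} [Ring A]

def eqLE {t : ℕ} (Vi : Fin t → Type*) [∀ i, AddCommGroup (Vi i)] [∀ i, Module A (Vi i)]
    {a b : Fin t} (h : a = b) : Vi a ≃ₗ[A] Vi b := by
  subst h; exact LinearEquiv.refl A _

theorem simpleOfPi {t : ℕ} (Vi : Fin t → Type*) [∀ i, AddCommGroup (Vi i)]
    [∀ i, Module A (Vi i)] [∀ i, IsSimpleModule A (Vi i)] (n : Fin t → ℕ)
    (p : Submodule A (∀ j, Fin (n j) → Vi j)) (hp : IsSimpleModule A p) :
    ∃ i, Nonempty (p ≃ₗ[A] Vi i) := by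
  haveI := hp
  haveI : Nontrivial p := IsSimpleModule.nontrivial A p
  obtain ⟨x, hx⟩ := exists_ne (0 : p)
  have hex : ∃ j a, (x : ∀ j, Fin (n j) → Vi j) j a ≠ 0 := by
    by_contra h
    push_neg at h
    exact hx (Subtype.ext (funext fun j => funext fun a => h j a))
  obtain ⟨j, a, hja⟩ := hex
  set π : p →ₗ[A] Vi j := (LinearMap.proj a) ∘ₗ (LinearMap.proj j) ∘ₗ p.subtype with hπdef
  have hπ : π ≠ 0 := fun h => hja (by
    have := DFunLike.congr_fun h x
    simpa [hπdef] using this)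
  exact ⟨j, ⟨LinearEquiv.ofBijective π (LinearMap.bijective_of_ne_zero hπ)⟩⟩

theorem decompAux (F : Type*) [Field F] [Algebra F A] [IsSemisimpleRing A]
    {t : ℕ} (Vi : Fin t → Type*) [∀ i, AddCommGroup (Vi i)] [∀ i, Module A (Vi i)]
    (d : ℕ) :
    ∀ (U : Type u) [AddCommGroup U] [Module A U] [Module F U] [IsScalarTower F A U]
      [FiniteDimensional F U],
      finrank F U ≤ d →
      (∀ p : Submodule A U, IsSimpleModule A p → ∃ i, Nonempty (p ≃ₗ[A] Vi i)) →
      ∃ (ι : Type) (_ : Fintype ι) (κ : ι → Fin t), Nonempty (U ≃ₗ[A] ∀ k, Vi (κ k)) := by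
  induction d with
  | zero =>
    intro U _ _ _ _ _ hd _
    haveI : Subsingleton U := by
      rw [Nat.le_zero] at hd
      exact Module.finrank_zero_iff.mp hd
    exact ⟨Empty, inferInstance, fun x => x.elim,
      ⟨subsingletonLE A U _⟩⟩
  | succ d ih =>
    intro U _ _ _ _ _ hd hsimp
    by_cases hU : Subsingleton U
    · exact ⟨Empty, inferInstance, fun x => x.elim, ⟨subsingletonLE A U _⟩⟩
    haveI : Nontrivial U := not_subsingleton_iff_nontrivial.mp hU
    obtain ⟨p, hp⟩ := IsSemisimpleModule.exists_simple_submodule (R := A) (M := U)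
    haveI := hp
    obtain ⟨i, ⟨ep⟩⟩ := hsimp p hp
    obtain ⟨q, hq⟩ := exists_isCompl p
    haveI : FiniteDimensional F p := inferInstanceAs (FiniteDimensional F (p.restrictScalars F))
    haveI : FiniteDimensional F q := inferInstanceAs (FiniteDimensional F (q.restrictScalars F))
    have hsq : ∀ r : Submodule A q, IsSimpleModule A r → ∃ i, Nonempty (r ≃ₗ[A] Vi i) := by
      intro r hr
      haveI := hr
      have hinj := Submodule.injective_subtype q
      haveI : IsSimpleModule A (r.map q.subtype) :=
        IsSimpleModule.congr (Submodule.equivMapOfInjective q.subtype hinj r).symm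
      obtain ⟨i', ⟨e⟩⟩ := hsimp (r.map q.subtype) inferInstance
      exact ⟨i', ⟨(Submodule.equivMapOfInjective q.subtype hinj r).trans e⟩⟩
    have eU : (p × q) ≃ₗ[A] U := Submodule.prodEquivOfIsCompl p q hq
    have hsum : finrank F p + finrank F q = finrank F U := by
      rw [← Module.finrank_prod (R := F) (M := p) (M' := q)]
      exact (eU.restrictScalars F).finrank_eq
    haveI : Nontrivial p := IsSimpleModule.nontrivial A p
    have hppos : 0 < finrank F p := Module.finrank_pos
    have hqd : finrank F q ≤ d := by omega
    obtain ⟨ι, _, κ, ⟨eq'⟩⟩ := ih q hqd hsq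
    refine ⟨Unit ⊕ ι, inferInstance, Sum.elim (fun _ => i) κ, ⟨?_⟩⟩
    exact eU.symm.trans ((LinearEquiv.prodCongr ep eq').trans
      ((LinearEquiv.prodCongr (LinearEquiv.funUnique Unit A (Vi i)).symm
        (LinearEquiv.refl A _)).trans
        (sumPiLE A (fun x => Vi (Sum.elim (fun _ => i) κ x))).symm))

end decomp
theorem stmt8 (F A : Type*) [Field F] [Ring A] [Algebra F A]
    [FiniteDimensional F A] [IsSemisimpleRing A]
    (t : ℕ) (Vi : Fin t → Type*)
    [∀ i, AddCommGroup (Vi i)] [∀ i, Module A (Vi i)]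
    [∀ i, Module F (Vi i)] [∀ i, IsScalarTower F A (Vi i)]
    [∀ i, FiniteDimensional F (Vi i)]
    [∀ i, IsSimpleModule A (Vi i)]
    (hdist : ∀ i j, i ≠ j → IsEmpty (Vi i ≃ₗ[A] Vi j))
    (m : Fin t → ℕ)
    (regiso : A ≃ₗ[A] (∀ i, Fin (m i) → Vi i))
    (M : Type*) [AddCommGroup M] [Module A M] [Module F M]
    [IsScalarTower F A M] [FiniteDimensional F M]
    (s : Fin t → ℕ)
    (Miso : M ≃ₗ[A] (∀ i, Fin (s i) → Vi i))
    (ℓ : ℕ) (hℓ : 1 ≤ ℓ) (u : Fin ℓ → M) :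
    (∃ N : Submodule A (∀ i, Fin (min (s i) (ℓ * m i)) → Vi i),
        Nonempty ((Submodule.span A (Set.range u)) ≃ₗ[A] N)) ∧
    Module.finrank F ((Submodule.span A (Set.range u)).restrictScalars F) ≤
      ∑ i, min (s i) (ℓ * m i) * Module.finrank F (Vi i) := by
  classical
  set p := Submodule.span A (Set.range u) with hpdef
  haveI : FiniteDimensional F p := inferInstanceAs (FiniteDimensional F (p.restrictScalars F))
  -- every simple submodule of p is isomorphic to some Vi
  have hsimp : ∀ r : Submodule A p, IsSimpleModule A r → ∃ i, Nonempty (r ≃ₗ[A] Vi i) := by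
    intro r hr
    haveI := hr
    set f : p →ₗ[A] (∀ j, Fin (s j) → Vi j) := Miso.toLinearMap ∘ₗ p.subtype with hfdef
    have hf : Function.Injective f := Miso.injective.comp (Submodule.injective_subtype p)
    haveI : IsSimpleModule A (r.map f) :=
      IsSimpleModule.congr (Submodule.equivMapOfInjective f hf r).symm
    obtain ⟨i, ⟨e⟩⟩ := simpleOfPi Vi s (r.map f) inferInstance
    exact ⟨i, ⟨(Submodule.equivMapOfInjective f hf r).trans e⟩⟩
  obtain ⟨ι, _, κ, ⟨e⟩⟩ := decompAux F Vi (finrank F p) p le_rfl hsimp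
  -- regroup by fibers
  let fib : Fin t → Type _ := fun j => {k : ι // κ k = j}
  let c : Fin t → ℕ := fun j => Fintype.card (fib j)
  let σ := Equiv.sigmaFiberEquiv κ
  let E1 : (∀ x : Σ j, fib j, Vi x.1) ≃ₗ[A] (∀ k : ι, Vi (κ k)) :=
    (LinearEquiv.piCongrRight fun x : Σ j, fib j => eqLE Vi x.2.2.symm).trans
      (LinearEquiv.piCongrLeft A (fun k => Vi (κ k)) σ)
  let E2 : (∀ j, fib j → Vi j) ≃ₗ[A] (∀ x : Σ j, fib j, Vi x.1) :=
    (LinearEquiv.piCurry A (fun j (_ : fib j) => Vi j)).symm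
  let E : p ≃ₗ[A] (∀ j, fib j → Vi j) := e.trans (E2.trans E1).symm
  -- dimension facts
  have hd : ∀ i, 0 < finrank F (Vi i) := fun i => by
    haveI : Nontrivial (Vi i) := IsSimpleModule.nontrivial A (Vi i)
    exact Module.finrank_pos
  -- bound 1 : c i ≤ s i
  have hzero : ∀ (i j : Fin t), j ≠ i → ∀ {Q Q' : Type} [Fintype Q] [DecidableEq Q],
      ∀ g : (fib i → Vi i) →ₗ[A] (Q → Q' → Vi j), g = 0 := by
    intro i j hj Q Q' _ _ g
    exact piZeroCod (fun g' => piZeroCod (fun g'' => piZeroDom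
      (fun g''' => schurZero (hdist i j hj.symm) g''') g'') g') g
  have hb1 : ∀ i, c i ≤ s i := by
    intro i
    let ψ : (∀ j, fib j → Vi j) →ₗ[A] (∀ j, Fin (s j) → Vi j) :=
      Miso.toLinearMap ∘ₗ p.subtype ∘ₗ E.symm.toLinearMap
    have hψ : Function.Injective ψ :=
      Miso.injective.comp ((Submodule.injective_subtype p).comp E.symm.injective)
    obtain ⟨g, hg⟩ := keyBlock ψ hψ i (fun j hj g => by
      exact piZeroCod (fun g' => piZeroDom
        (fun g'' => schurZero (hdist i j hj.symm) g'') g') g)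
    have := dimLE (F := F) g hg
    rw [finrankFun (F := F) (Vi i) (fib i), finrankFun (F := F) (Vi i) (Fin (s i)),
      Fintype.card_fin] at this
    exact Nat.le_of_mul_le_mul_right this (hd i)
  -- bound 2 : c i ≤ ℓ * m i
  have hb2 : ∀ i, c i ≤ ℓ * m i := by
    intro i
    let ρ : (Fin ℓ →₀ A) →ₗ[A] M := Finsupp.linearCombination A u
    have hrange : LinearMap.range ρ = p := (Finsupp.range_linearCombination A).trans hpdef.symm
    obtain ⟨q, hq⟩ := exists_isCompl (LinearMap.ker ρ)
    let eQ : p ≃ₗ[A] q :=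
      (LinearEquiv.ofEq p (LinearMap.range ρ) hrange.symm).trans
        (ρ.quotKerEquivRange.symm.trans (Submodule.quotientEquivOfIsCompl _ q hq))
    let ψ : (∀ j, fib j → Vi j) →ₗ[A] (∀ j, Fin ℓ → Fin (m j) → Vi j) :=
      (swapLE A (Fin ℓ) (fun j => Fin (m j) → Vi j)).toLinearMap ∘ₗ
        (LinearEquiv.piCongrRight fun _ : Fin ℓ => regiso).toLinearMap ∘ₗ
        (Finsupp.linearEquivFunOnFinite A A (Fin ℓ)).toLinearMap ∘ₗ
        q.subtype ∘ₗ eQ.toLinearMap ∘ₗ E.symm.toLinearMap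
    have hψ : Function.Injective ψ := by
      apply (swapLE A (Fin ℓ) (fun j => Fin (m j) → Vi j)).injective.comp
      apply Function.Injective.comp
        ((LinearEquiv.piCongrRight fun _ : Fin ℓ => regiso).injective)
      apply Function.Injective.comp ((Finsupp.linearEquivFunOnFinite A A (Fin ℓ)).injective)
      exact (Submodule.injective_subtype q).comp (eQ.injective.comp E.symm.injective)
    obtain ⟨g, hg⟩ := keyBlock ψ hψ i (fun j hj g => hzero i j hj g)
    have := dimLE (F := F) g hg
    rw [finrankFun, finrankFun (Fin (m i) → Vi i), finrankFun, Fintype.card_fin,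
      Fintype.card_fin, ← mul_assoc] at this
    exact Nat.le_of_mul_le_mul_right this (hd i)
  have hc : ∀ i, c i ≤ min (s i) (ℓ * m i) := fun i => le_min (hb1 i) (hb2 i)
  -- zero-extension embedding
  let emb : ∀ j, fib j ↪ Fin (min (s j) (ℓ * m j)) := fun j =>
    Classical.choice (Function.Embedding.nonempty_of_card_le (by
      simpa [Fintype.card_fin] using hc j))
  let Ej : ∀ j, (fib j → Vi j) →ₗ[A] (Fin (min (s j) (ℓ * m j)) → Vi j) := fun j =>
    (Finsupp.linearEquivFunOnFinite A (Vi j) _).toLinearMap ∘ₗ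
      Finsupp.lmapDomain (Vi j) A (emb j) ∘ₗ
      (Finsupp.linearEquivFunOnFinite A (Vi j) (fib j)).symm.toLinearMap
  have hEj : ∀ j, Function.Injective (Ej j) := by
    intro j
    apply (Finsupp.linearEquivFunOnFinite A (Vi j) _).injective.comp
    apply Function.Injective.comp (g := Finsupp.lmapDomain (Vi j) A (emb j))
      (Finsupp.mapDomain_injective (emb j).injective)
    exact (Finsupp.linearEquivFunOnFinite A (Vi j) (fib j)).symm.injective
  let Φ : (∀ j, fib j → Vi j) →ₗ[A] (∀ j, Fin (min (s j) (ℓ * m j)) → Vi j) :=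
    LinearMap.pi (fun j => Ej j ∘ₗ LinearMap.proj j)
  have hΦ : Function.Injective Φ := by
    intro x y hxy
    funext j
    exact hEj j (congrFun hxy j)
  constructor
  · exact ⟨LinearMap.range Φ, ⟨E.trans (LinearEquiv.ofInjective Φ hΦ)⟩⟩
  · have h1 : finrank F (p.restrictScalars F) = finrank F (∀ j, fib j → Vi j) := by
      have e1 : (p.restrictScalars F) ≃ₗ[F] (∀ j, fib j → Vi j) :=
        ((Submodule.restrictScalarsEquiv F A M p).restrictScalars F).trans (E.restrictScalars F)
      exact e1.finrank_eq
    rw [h1, Module.finrank_pi_fintype]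
    apply Finset.sum_le_sum
    intro j _
    rw [finrankFun]
    exact Nat.mul_le_mul (hc j) le_rfl
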